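/- If A and B are 4×4 complex Hadamard matrices in dephased form and tr(A) = tr(B), then A and B are spectrally equivalent, i.e. the characteristic polynomial of A equals the characteristic polynomial of B. -/

import Mathlib

open Matrix Polynomial Complex

/-- A 4×4 complex Hadamard matrix: unitary with all entries of absolute value `1/√4`. -/
def IsHadamard (H : Matrix (Fin 4) (Fin 4) ℂ) : Prop :=
  H * Hᴴ = 1 ∧ Hᴴ * H = 1 ∧ ∀ i j, ‖H i j‖ = 1 / Real.sqrt 4

/-- Dephased form: all entries of the 0th row and 0th column equal `1/√4`. -/
def IsDephased (H : Matrix (Fin 4) (Fin 4) ℂ) : Prop :=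
  (∀ j, H 0 j = ((1 / Real.sqrt 4 : ℝ) : ℂ)) ∧ (∀ i, H i 0 = ((1 / Real.sqrt 4 : ℝ) : ℂ))

lemma cast_val : ((1 / Real.sqrt 4 : ℝ) : ℂ) = 1/2 := by
  have h : Real.sqrt 4 = 2 := by
    rw [show (4:ℝ) = 2^2 by norm_num, Real.sqrt_sq (by norm_num : (0:ℝ) ≤ 2)]
  rw [h]; norm_num

lemma star_half : (star ((1:ℂ)/2)) = 1/2 := by
  simp


variable {A : Matrix (Fin 4) (Fin 4) ℂ}

lemma rowsum (hA : _root_.IsHadamard A) (hA' : IsDephased A) (i : Fin 4) :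
    A i 0 + A i 1 + A i 2 + A i 3 = if i = 0 then 2 else 0 := by
  have h := congrFun (congrFun hA.1 i) 0
  simp only [Matrix.mul_apply, Matrix.conjTranspose_apply, Fin.sum_univ_four,
    Matrix.one_apply] at h
  rw [hA'.1 0, hA'.1 1, hA'.1 2, hA'.1 3, cast_val, star_half] at h
  rcases eq_or_ne i 0 with hi | hi
  · simp only [hi, if_true, eq_self_iff_true] at h ⊢; linear_combination 2*h
  · rw [if_neg hi] at h; rw [if_neg hi]; linear_combination 2*h

lemma colsum (hA : _root_.IsHadamard A) (hA' : IsDephased A) (j : Fin 4) :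
    A 0 j + A 1 j + A 2 j + A 3 j = if j = 0 then 2 else 0 := by
  have h := congrFun (congrFun hA.2.1 0) j
  simp only [Matrix.mul_apply, Matrix.conjTranspose_apply, Fin.sum_univ_four,
    Matrix.one_apply] at h
  rw [hA'.2 0, hA'.2 1, hA'.2 2, hA'.2 3, cast_val, star_half] at h
  rcases eq_or_ne j 0 with hi | hi
  · simp only [hi, if_true, eq_self_iff_true] at h ⊢; linear_combination 2*h
  · rw [if_neg (fun hc => hi hc.symm)] at h
    rw [if_neg hi]; linear_combination 2*h

lemma eval_charpoly' (M : Matrix (Fin 4) (Fin 4) ℂ) (x : ℂ) :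
    M.charpoly.eval x = (x • (1 : Matrix (Fin 4) (Fin 4) ℂ) - M).det := by
  rw [Matrix.charpoly, ← Polynomial.coe_evalRingHom, RingHom.map_det]
  congr 1
  ext i j
  by_cases h : i = j
  · subst h
    simp [Matrix.charmatrix_apply_eq, Matrix.one_apply]
  · simp [Matrix.charmatrix_apply_ne _ _ _ h, Matrix.one_apply, h]

lemma eval_pm_one_eq_zero (hA : _root_.IsHadamard A) (hA' : IsDephased A) (e : ℂ) (he : e = 1 ∨ e = -1) :
    A.charpoly.eval e = 0 := by
  have he2 : e * e = 1 := by rcases he with he | he <;> rw [he] <;> ring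
  rw [eval_charpoly']
  rw [← Matrix.exists_mulVec_eq_zero_iff]
  refine ⟨![2*e+1, 1, 1, 1], ?_, ?_⟩
  · intro h
    have h1 := congrFun h 1
    norm_num at h1
  · rw [sub_mulVec, Matrix.smul_mulVec, Matrix.one_mulVec]
    have hr0 := rowsum hA hA' 0
    have hr1 := rowsum hA hA' 1
    have hr2 := rowsum hA hA' 2
    have hr3 := rowsum hA hA' 3
    rw [if_pos rfl] at hr0
    rw [if_neg (by decide)] at hr1
    rw [if_neg (by decide)] at hr2
    rw [if_neg (by decide)] at hr3
    have h00 := hA'.2 0; have h10 := hA'.2 1; have h20 := hA'.2 2; have h30 := hA'.2 3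
    rw [cast_val] at h00 h10 h20 h30
    funext i
    simp only [Pi.sub_apply, Pi.smul_apply, smul_eq_mul, Pi.zero_apply, Matrix.mulVec,
      dotProduct, Fin.sum_univ_four]
    fin_cases i <;> simp <;>
      first
        | linear_combination (-2*e)*h00 - hr0 + 2*he2
        | linear_combination (-2*e)*h10 - hr1
        | linear_combination (-2*e)*h20 - hr2
        | linear_combination (-2*e)*h30 - hr3

lemma charpoly_eq (hA : _root_.IsHadamard A) (hA' : IsDephased A) :
    A.charpoly = X^4 - C A.trace * X^3 - C (1 + A.det) * X^2 + C A.trace * X + C A.det := by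
  have hdeg : A.charpoly.natDegree = 4 := by
    rw [Matrix.charpoly_natDegree_eq_dim]; simp
  have hc4 : A.charpoly.coeff 4 = 1 := by
    have h := A.charpoly_monic.coeff_natDegree
    rw [hdeg] at h; exact h
  have hc3 : A.charpoly.coeff 3 = - A.trace := by
    have h := A.trace_eq_neg_charpoly_coeff
    simp only [Fintype.card_fin] at h
    rw [show (4:ℕ) - 1 = 3 from rfl] at h
    linear_combination h
  have hc0 : A.charpoly.coeff 0 = A.det := by
    have h := A.det_eq_sign_charpoly_coeff
    simp only [Fintype.card_fin] at h
    rw [h]; ring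
  have hev : ∀ x : ℂ, A.charpoly.eval x =
      A.charpoly.coeff 0 + A.charpoly.coeff 1 * x + A.charpoly.coeff 2 * x^2
        + A.charpoly.coeff 3 * x^3 + A.charpoly.coeff 4 * x^4 := by
    intro x
    rw [Polynomial.eval_eq_sum_range' (by omega : A.charpoly.natDegree < 5) x]
    simp [Finset.sum_range_succ]
  have h1 := eval_pm_one_eq_zero hA hA' 1 (Or.inl rfl)
  have h2 := eval_pm_one_eq_zero hA hA' (-1) (Or.inr rfl)
  rw [hev 1] at h1
  rw [hev (-1)] at h2
  have hc1 : A.charpoly.coeff 1 = A.trace := by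
    linear_combination (h1 - h2)/2 - hc3
  have hc2 : A.charpoly.coeff 2 = -1 - A.det := by
    linear_combination (h1 + h2)/2 - hc0 - hc4
  ext n
  match n with
  | 0 => rw [hc0]; simp [Polynomial.coeff_add, Polynomial.coeff_sub, add_mul, one_mul,
           Polynomial.coeff_C_mul, Polynomial.coeff_X_pow, Polynomial.coeff_C, Polynomial.coeff_X]
  | 1 => rw [hc1]; simp [Polynomial.coeff_add, Polynomial.coeff_sub, add_mul, one_mul,
           Polynomial.coeff_C_mul, Polynomial.coeff_X_pow, Polynomial.coeff_C, Polynomial.coeff_X]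
  | 2 => rw [hc2]; simp [Polynomial.coeff_add, Polynomial.coeff_sub, add_mul, one_mul,
           Polynomial.coeff_C_mul, Polynomial.coeff_X_pow, Polynomial.coeff_C, Polynomial.coeff_X]
         ring
  | 3 => rw [hc3]; simp [Polynomial.coeff_add, Polynomial.coeff_sub, add_mul, one_mul,
           Polynomial.coeff_C_mul, Polynomial.coeff_X_pow, Polynomial.coeff_C, Polynomial.coeff_X]
  | 4 => rw [hc4]; simp [Polynomial.coeff_add, Polynomial.coeff_sub, add_mul, one_mul,
           Polynomial.coeff_C_mul, Polynomial.coeff_X_pow, Polynomial.coeff_C, Polynomial.coeff_X]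
  | (m+5) =>
    have h5 : A.charpoly.coeff (m+5) = 0 :=
      Polynomial.coeff_eq_zero_of_natDegree_lt (by omega)
    have e4 : m+5 ≠ 4 := by omega
    have e3 : m+5 ≠ 3 := by omega
    have e2 : m+5 ≠ 2 := by omega
    have e1 : (1:ℕ) ≠ m+5 := by omega
    have e0 : m+5 ≠ 0 := by omega
    rw [h5]
    simp [Polynomial.coeff_add, Polynomial.coeff_sub, add_mul, one_mul,
      Polynomial.coeff_C_mul, Polynomial.coeff_X_pow, Polynomial.coeff_C, Polynomial.coeff_X,
      e4, e3, e2, e1, e0]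

lemma conjT_had (hA : _root_.IsHadamard A) (hA' : IsDephased A) :
    _root_.IsHadamard Aᴴ ∧ IsDephased Aᴴ := by
  refine ⟨⟨by rw [conjTranspose_conjTranspose]; exact hA.2.1,
          by rw [conjTranspose_conjTranspose]; exact hA.1, ?_⟩, ?_, ?_⟩
  · intro i j
    rw [Matrix.conjTranspose_apply]
    show ‖(starRingEnd ℂ) (A j i)‖ = _
    rw [Complex.norm_conj]
    exact hA.2.2 j i
  · intro j
    rw [Matrix.conjTranspose_apply, hA'.2 j]; exact Complex.conj_ofReal _
  · intro i
    rw [Matrix.conjTranspose_apply, hA'.1 i]; exact Complex.conj_ofReal _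

lemma det_unit (hA : _root_.IsHadamard A) : A.det * star A.det = 1 := by
  have h := congrArg Matrix.det hA.1
  rwa [Matrix.det_mul, Matrix.det_conjTranspose, Matrix.det_one] at h

lemma det_rel (hA : _root_.IsHadamard A) (hA' : IsDephased A) :
    A.det * star A.trace = - A.trace := by
  have hdd := det_unit hA
  have key : ((2:ℂ) • (1 : Matrix (Fin 4) (Fin 4) ℂ) - Aᴴ) = Aᴴ * ((2:ℂ) • A - 1) := by
    rw [Matrix.mul_sub, Matrix.mul_one, Matrix.mul_smul, hA.2.1]
  have hdet := congrArg Matrix.det key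
  rw [Matrix.det_mul] at hdet
  have hsplit : (2:ℂ) • A - 1 = (2:ℂ) • (A - ((2:ℂ)⁻¹) • (1 : Matrix (Fin 4) (Fin 4) ℂ)) := by
    rw [smul_sub, smul_smul]; norm_num
  have hneg : A - ((2:ℂ)⁻¹) • (1 : Matrix (Fin 4) (Fin 4) ℂ)
      = -(((2:ℂ)⁻¹) • (1 : Matrix (Fin 4) (Fin 4) ℂ) - A) := (neg_sub _ _).symm
  rw [hsplit, Matrix.det_smul, hneg, Matrix.det_neg, ← eval_charpoly',
    ← eval_charpoly'] at hdet
  have hAH := conjT_had hA hA'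
  rw [charpoly_eq hAH.1 hAH.2, charpoly_eq hA hA',
    Matrix.trace_conjTranspose, Matrix.det_conjTranspose] at hdet
  simp only [Polynomial.eval_add, Polynomial.eval_sub, Polynomial.eval_mul,
    Polynomial.eval_pow, Polynomial.eval_X, Polynomial.eval_C, Fintype.card_fin] at hdet
  linear_combination (-(A.det)/6) * hdet - (A.trace + 2*A.det) * hdd

lemma det4_expand (M : Matrix (Fin 4) (Fin 4) ℂ) :
    M.det =
      M 0 0 * (M 1 1 * (M 2 2 * M 3 3 - M 2 3 * M 3 2) - M 1 2 * (M 2 1 * M 3 3 - M 2 3 * M 3 1) + M 1 3 * (M 2 1 * M 3 2 - M 2 2 * M 3 1))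
    - M 0 1 * (M 1 0 * (M 2 2 * M 3 3 - M 2 3 * M 3 2) - M 1 2 * (M 2 0 * M 3 3 - M 2 3 * M 3 0) + M 1 3 * (M 2 0 * M 3 2 - M 2 2 * M 3 0))
    + M 0 2 * (M 1 0 * (M 2 1 * M 3 3 - M 2 3 * M 3 1) - M 1 1 * (M 2 0 * M 3 3 - M 2 3 * M 3 0) + M 1 3 * (M 2 0 * M 3 1 - M 2 1 * M 3 0))
    - M 0 3 * (M 1 0 * (M 2 1 * M 3 2 - M 2 2 * M 3 1) - M 1 1 * (M 2 0 * M 3 2 - M 2 2 * M 3 0) + M 1 2 * (M 2 0 * M 3 1 - M 2 1 * M 3 0)) := by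
  rw [Matrix.det_succ_row_zero, Fin.sum_univ_four]
  simp (config := { decide := true }) [Matrix.det_fin_three, Matrix.submatrix_apply,
    Fin.succAbove, Fin.lt_def, show (Fin.succ 2 : Fin 4) = 3 from rfl,
    show (Fin.castSucc 2 : Fin 4) = 2 from rfl]
  ring

lemma det_one_of_trace_zero (hA : _root_.IsHadamard A) (hA' : IsDephased A) (ht : A.trace = 0) :
    A.det = 1 := by
  have hd0 : ∀ j, A 0 j = 1/2 := fun j => by rw [hA'.1 j, cast_val]
  have hc0 : ∀ i, A i 0 = 1/2 := fun i => by rw [hA'.2 i, cast_val]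
  -- row sums
  have hr1 : (1:ℂ)/2 + A 1 1 + A 1 2 + A 1 3 = 0 := by
    have h := rowsum hA hA' 1; rw [if_neg (by decide), hc0 1] at h; exact h
  have hr2 : (1:ℂ)/2 + A 2 1 + A 2 2 + A 2 3 = 0 := by
    have h := rowsum hA hA' 2; rw [if_neg (by decide), hc0 2] at h; exact h
  have hr3 : (1:ℂ)/2 + A 3 1 + A 3 2 + A 3 3 = 0 := by
    have h := rowsum hA hA' 3; rw [if_neg (by decide), hc0 3] at h; exact h
  have hcol1 : (1:ℂ)/2 + A 1 1 + A 2 1 + A 3 1 = 0 := by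
    have h := colsum hA hA' 1; rw [if_neg (by decide), hd0 1] at h; linear_combination h
  have hcol2 : (1:ℂ)/2 + A 1 2 + A 2 2 + A 3 2 = 0 := by
    have h := colsum hA hA' 2; rw [if_neg (by decide), hd0 2] at h; linear_combination h
  have hcol3 : (1:ℂ)/2 + A 1 3 + A 2 3 + A 3 3 = 0 := by
    have h := colsum hA hA' 3; rw [if_neg (by decide), hd0 3] at h; linear_combination h
  -- trace
  have htr : (1:ℂ)/2 + A 1 1 + A 2 2 + A 3 3 = 0 := by
    have h : A.trace = A 0 0 + A 1 1 + A 2 2 + A 3 3 := by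
      simp [Matrix.trace, Matrix.diag, Fin.sum_univ_four]
    rw [ht, hc0 0] at h; linear_combination -h
  have htrc : (1:ℂ)/2 + (starRingEnd ℂ) (A 1 1) + (starRingEnd ℂ) (A 2 2)
      + (starRingEnd ℂ) (A 3 3) = 0 := by
    have h := congrArg (starRingEnd ℂ) htr
    simp only [map_add, map_div₀, _root_.map_one, map_ofNat, map_zero] at h
    exact h
  -- unimodularity
  have hu : ∀ i j, A i j * (starRingEnd ℂ) (A i j) = 1/4 := by
    intro i j
    have hn : Complex.normSq (A i j) = 1/4 := by
      rw [← Complex.sq_norm, hA.2.2 i j,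
        show Real.sqrt 4 = 2 by rw [show (4:ℝ) = 2^2 by norm_num, Real.sqrt_sq (by norm_num : (0:ℝ) ≤ 2)]]
      norm_num
    rw [Complex.mul_conj, hn]; norm_num
  -- orthogonality of rows 1 and 2
  have hor : (1:ℂ)/4 + A 1 1 * (starRingEnd ℂ) (A 2 1) + A 1 2 * (starRingEnd ℂ) (A 2 2)
      + A 1 3 * (starRingEnd ℂ) (A 2 3) = 0 := by
    have h := congrFun (congrFun hA.1 1) 2
    simp only [Matrix.mul_apply, Matrix.conjTranspose_apply, Fin.sum_univ_four,
      Matrix.one_apply] at h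
    rw [if_neg (by decide), hc0 1, hc0 2, star_half] at h
    have hs : ∀ z : ℂ, star z = (starRingEnd ℂ) z := fun _ => rfl
    rw [hs (A 2 1), hs (A 2 2), hs (A 2 3)] at h
    linear_combination h
  -- main factorization: one of the diagonal entries is -1/2
  have hfac : ((1:ℂ)/2 + A 1 1) * (((1:ℂ)/2 + A 2 2) * ((1:ℂ)/2 + A 3 3)) = 0 := by
    linear_combination (1/4)*htr + 2*(A 1 1)*(A 2 2)*(A 3 3)*htrc
      + (-2*(A 1 1)*(A 2 2))*(hu 3 3) + (-2*(A 1 1)*(A 3 3))*(hu 2 2)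
      + (-2*(A 2 2)*(A 3 3))*(hu 1 1)
  rcases mul_eq_zero.mp hfac with h1 | hek
  · -- Case I : A 1 1 = -1/2
    have ha : A 1 1 = -(1/2) := by linear_combination h1
    have hk : A 3 3 = -A 2 2 := by linear_combination htr - h1
    have hcc : A 1 3 = -A 1 2 := by linear_combination hr1 - h1
    have hg : A 3 1 = -A 2 1 := by linear_combination hcol1 - h1
    have hh : A 3 2 = -(1/2) + A 2 1 + A 2 2 := by linear_combination hr3 - hg - hk
    have hb : A 1 2 = -A 2 1 - 2*A 2 2 := by linear_combination hcol2 - hh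
    have hbc : (starRingEnd ℂ) (A 1 2) = -(starRingEnd ℂ) (A 2 1) - 2*(starRingEnd ℂ) (A 2 2) := by
      have h := congrArg (starRingEnd ℂ) hb
      simp only [map_add, map_neg, map_sub, _root_.map_mul, map_ofNat] at h
      exact h
    have hde2 : (A 2 1 + A 2 2)^2 = 0 := by
      linear_combination (2*(A 2 1)*(A 2 2)*((starRingEnd ℂ) (A 2 1) + 2*(starRingEnd ℂ) (A 2 2)))*hb
        + (-2*(A 2 1)*(A 2 2)*(A 1 2))*hbc + (2*(A 2 1)*(A 2 2))*(hu 1 2)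
        + (-2*(A 2 1)*(A 2 2) - 4*(A 2 2)^2)*(hu 2 1)
        + (-8*(A 2 1)*(A 2 2) - 4*(A 2 1)^2)*(hu 2 2)
    have hde : A 2 1 = -A 2 2 := by
      have h0 := sq_eq_zero_iff.mp hde2
      linear_combination h0
    have hf : A 2 3 = -(1/2) := by linear_combination hr2 - hde
    have hh2 : A 3 2 = -(1/2) := by linear_combination hh + hde
    have hb2 : A 1 2 = -A 2 2 := by linear_combination hb - hde
    have hc2 : A 1 3 = A 2 2 := by linear_combination hcc - hb2
    have hg2 : A 3 1 = A 2 2 := by linear_combination hg - hde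
    have hdec : (starRingEnd ℂ) (A 2 1) = -(starRingEnd ℂ) (A 2 2) := by
      have h := congrArg (starRingEnd ℂ) hde
      simp only [map_neg] at h; exact h
    have hfc : (starRingEnd ℂ) (A 2 3) = -(1/2) := by
      have h := congrArg (starRingEnd ℂ) hf
      simp only [map_neg, map_div₀, _root_.map_one, map_ofNat] at h; exact h
    rw [ha, hb2, hc2, hdec, hfc] at hor
    have he' : (starRingEnd ℂ) (A 2 2) = A 2 2 := by
      linear_combination 2*hor + 2*(hu 2 2)
    have he2 : (A 2 2 - 1/2) * (A 2 2 + 1/2) = 0 := by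
      linear_combination hu 2 2 - A 2 2 * he'
    rcases mul_eq_zero.mp he2 with he | he
    · have e22 : A 2 2 = 1/2 := by linear_combination he
      have e12 : A 1 2 = -(1/2) := by linear_combination hb2 - he
      have e13 : A 1 3 = 1/2 := by linear_combination hc2 + he
      have e21 : A 2 1 = -(1/2) := by linear_combination hde - he
      have e31 : A 3 1 = 1/2 := by linear_combination hg2 + he
      have e33 : A 3 3 = -(1/2) := by linear_combination hk - he
      rw [det4_expand, hc0 0, hd0 1, hd0 2, hd0 3, hc0 1, hc0 2, hc0 3,
        ha, e12, e13, e21, e22, hf, e31, hh2, e33]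
      norm_num
    · have e22 : A 2 2 = -(1/2) := by linear_combination he
      have e12 : A 1 2 = 1/2 := by linear_combination hb2 - he
      have e13 : A 1 3 = -(1/2) := by linear_combination hc2 + he
      have e21 : A 2 1 = 1/2 := by linear_combination hde - he
      have e31 : A 3 1 = -(1/2) := by linear_combination hg2 + he
      have e33 : A 3 3 = 1/2 := by linear_combination hk - he
      rw [det4_expand, hc0 0, hd0 1, hd0 2, hd0 3, hc0 1, hc0 2, hc0 3,
        ha, e12, e13, e21, e22, hf, e31, hh2, e33]
      norm_num
  · rcases mul_eq_zero.mp hek with h2 | h3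
    · -- Case II : A 2 2 = -1/2
      have he : A 2 2 = -(1/2) := by linear_combination h2
      have hk : A 3 3 = -A 1 1 := by linear_combination htr - h2
      have hf : A 2 3 = -A 2 1 := by linear_combination hr2 - h2
      have hh : A 3 2 = -A 1 2 := by linear_combination hcol2 - h2
      have hg : A 3 1 = -(1/2) + A 1 2 + A 1 1 := by linear_combination hr3 - hh - hk
      have hd : A 2 1 = -2*A 1 1 - A 1 2 := by linear_combination hcol1 - hg
      have hdc : (starRingEnd ℂ) (A 2 1) = -2*(starRingEnd ℂ) (A 1 1) - (starRingEnd ℂ) (A 1 2) := by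
        have h := congrArg (starRingEnd ℂ) hd
        simp only [map_add, map_neg, map_sub, _root_.map_mul, map_ofNat] at h
        exact h
      have hab2 : (A 1 2 + A 1 1)^2 = 0 := by
        linear_combination (2*(A 1 2)*(A 1 1)*((starRingEnd ℂ) (A 1 2) + 2*(starRingEnd ℂ) (A 1 1)))*hd
          + (-2*(A 1 2)*(A 1 1)*(A 2 1))*hdc + (2*(A 1 2)*(A 1 1))*(hu 2 1)
          + (-2*(A 1 2)*(A 1 1) - 4*(A 1 1)^2)*(hu 1 2)
          + (-8*(A 1 2)*(A 1 1) - 4*(A 1 2)^2)*(hu 1 1)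
      have hab : A 1 2 = -A 1 1 := by
        have h0 := sq_eq_zero_iff.mp hab2
        linear_combination h0
      have hc : A 1 3 = -(1/2) := by linear_combination hr1 - hab
      have hh2 : A 3 2 = A 1 1 := by linear_combination hh - hab
      have hg2 : A 3 1 = -(1/2) := by linear_combination hg + hab
      have hd2 : A 2 1 = -A 1 1 := by linear_combination hd - hab
      have hf2 : A 2 3 = A 1 1 := by linear_combination hf - hd2
      have hd2c : (starRingEnd ℂ) (A 2 1) = -(starRingEnd ℂ) (A 1 1) := by
        have h := congrArg (starRingEnd ℂ) hd2
        simp only [map_neg] at h; exact h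
      have hec : (starRingEnd ℂ) (A 2 2) = -(1/2) := by
        have h := congrArg (starRingEnd ℂ) he
        simp only [map_neg, map_div₀, _root_.map_one, map_ofNat] at h; exact h
      have hf2c : (starRingEnd ℂ) (A 2 3) = (starRingEnd ℂ) (A 1 1) :=
        congrArg (starRingEnd ℂ) hf2
      rw [hab, hc, hd2c, hec, hf2c] at hor
      have ha' : (starRingEnd ℂ) (A 1 1) = A 1 1 := by
        linear_combination (-2)*hor - 2*(hu 1 1)
      have ha2 : (A 1 1 - 1/2) * (A 1 1 + 1/2) = 0 := by
        linear_combination hu 1 1 - A 1 1 * ha'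
      rcases mul_eq_zero.mp ha2 with ha | ha
      · have e11 : A 1 1 = 1/2 := by linear_combination ha
        have e12 : A 1 2 = -(1/2) := by linear_combination hab - ha
        have e21 : A 2 1 = -(1/2) := by linear_combination hd2 - ha
        have e23 : A 2 3 = 1/2 := by linear_combination hf2 + ha
        have e31 : A 3 1 = -(1/2) := hg2
        have e32 : A 3 2 = 1/2 := by linear_combination hh2 + ha
        have e33 : A 3 3 = -(1/2) := by linear_combination hk - ha
        rw [det4_expand, hc0 0, hd0 1, hd0 2, hd0 3, hc0 1, hc0 2, hc0 3,
          e11, e12, hc, e21, he, e23, e31, e32, e33]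
        norm_num
      · have e11 : A 1 1 = -(1/2) := by linear_combination ha
        have e12 : A 1 2 = 1/2 := by linear_combination hab - ha
        have e21 : A 2 1 = 1/2 := by linear_combination hd2 - ha
        have e23 : A 2 3 = -(1/2) := by linear_combination hf2 + ha
        have e31 : A 3 1 = -(1/2) := hg2
        have e32 : A 3 2 = -(1/2) := by linear_combination hh2 + ha
        have e33 : A 3 3 = 1/2 := by linear_combination hk - ha
        rw [det4_expand, hc0 0, hd0 1, hd0 2, hd0 3, hc0 1, hc0 2, hc0 3,
          e11, e12, hc, e21, he, e23, e31, e32, e33]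
        norm_num
    · -- Case III : A 3 3 = -1/2
      have hk : A 3 3 = -(1/2) := by linear_combination h3
      have he : A 2 2 = -A 1 1 := by linear_combination htr - h3
      have hh : A 3 2 = -A 3 1 := by linear_combination hr3 - h3
      have hf : A 2 3 = -A 1 3 := by linear_combination hcol3 - h3
      have hd : A 2 1 = -(1/2) + A 1 1 + A 1 3 := by linear_combination hr2 - he - hf
      have hg : A 3 1 = -2*A 1 1 - A 1 3 := by linear_combination hcol1 - hd
      have hgc : (starRingEnd ℂ) (A 3 1) = -2*(starRingEnd ℂ) (A 1 1) - (starRingEnd ℂ) (A 1 3) := by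
        have h := congrArg (starRingEnd ℂ) hg
        simp only [map_add, map_neg, map_sub, _root_.map_mul, map_ofNat] at h
        exact h
      have hac2 : (A 1 3 + A 1 1)^2 = 0 := by
        linear_combination (2*(A 1 3)*(A 1 1)*((starRingEnd ℂ) (A 1 3) + 2*(starRingEnd ℂ) (A 1 1)))*hg
          + (-2*(A 1 3)*(A 1 1)*(A 3 1))*hgc + (2*(A 1 3)*(A 1 1))*(hu 3 1)
          + (-2*(A 1 3)*(A 1 1) - 4*(A 1 1)^2)*(hu 1 3)
          + (-8*(A 1 3)*(A 1 1) - 4*(A 1 3)^2)*(hu 1 1)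
      have hac : A 1 3 = -A 1 1 := by
        have h0 := sq_eq_zero_iff.mp hac2
        linear_combination h0
      have hd2 : A 2 1 = -(1/2) := by linear_combination hd + hac
      have hb2 : A 1 2 = -(1/2) := by linear_combination hr1 - hac
      have hg2 : A 3 1 = -A 1 1 := by linear_combination hg - hac
      have hh2 : A 3 2 = A 1 1 := by linear_combination hh - hg2
      have hf2 : A 2 3 = A 1 1 := by linear_combination hf - hac
      have hd2c : (starRingEnd ℂ) (A 2 1) = -(1/2) := by
        have h := congrArg (starRingEnd ℂ) hd2
        simp only [map_neg, map_div₀, _root_.map_one, map_ofNat] at h; exact h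
      have hec : (starRingEnd ℂ) (A 2 2) = -(starRingEnd ℂ) (A 1 1) := by
        have h := congrArg (starRingEnd ℂ) he
        simp only [map_neg] at h; exact h
      have hf2c : (starRingEnd ℂ) (A 2 3) = (starRingEnd ℂ) (A 1 1) :=
        congrArg (starRingEnd ℂ) hf2
      rw [hb2, hac, hd2c, hec, hf2c] at hor
      have ha' : (starRingEnd ℂ) (A 1 1) = A 1 1 := by
        linear_combination 2*hor + 2*(hu 1 1)
      have ha2 : (A 1 1 - 1/2) * (A 1 1 + 1/2) = 0 := by
        linear_combination hu 1 1 - A 1 1 * ha'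
      rcases mul_eq_zero.mp ha2 with ha | ha
      · have e11 : A 1 1 = 1/2 := by linear_combination ha
        have e13 : A 1 3 = -(1/2) := by linear_combination hac - ha
        have e22 : A 2 2 = -(1/2) := by linear_combination he - ha
        have e23 : A 2 3 = 1/2 := by linear_combination hf2 + ha
        have e31 : A 3 1 = -(1/2) := by linear_combination hg2 - ha
        have e32 : A 3 2 = 1/2 := by linear_combination hh2 + ha
        rw [det4_expand, hc0 0, hd0 1, hd0 2, hd0 3, hc0 1, hc0 2, hc0 3,
          e11, hb2, e13, hd2, e22, e23, e31, e32, hk]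
        norm_num
      · have e11 : A 1 1 = -(1/2) := by linear_combination ha
        have e13 : A 1 3 = 1/2 := by linear_combination hac - ha
        have e22 : A 2 2 = 1/2 := by linear_combination he - ha
        have e23 : A 2 3 = -(1/2) := by linear_combination hf2 + ha
        have e31 : A 3 1 = 1/2 := by linear_combination hg2 - ha
        have e32 : A 3 2 = -(1/2) := by linear_combination hh2 + ha
        rw [det4_expand, hc0 0, hd0 1, hd0 2, hd0 3, hc0 1, hc0 2, hc0 3,
          e11, hb2, e13, hd2, e22, e23, e31, e32, hk]
        norm_num

theorem trace_eq_implies_spectrally_equivalent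
    (A B : Matrix (Fin 4) (Fin 4) ℂ)
    (hA : _root_.IsHadamard A) (hA' : IsDephased A)
    (hB : _root_.IsHadamard B) (hB' : IsDephased B)
    (htr : A.trace = B.trace) :
    A.charpoly = B.charpoly := by
  have hdet : A.det = B.det := by
    rcases eq_or_ne A.trace 0 with h0 | h0
    · rw [det_one_of_trace_zero hA hA' h0,
        det_one_of_trace_zero hB hB' (htr ▸ h0)]
    · have r1 := det_rel hA hA'
      have r2 := det_rel hB hB'
      rw [← htr] at r2
      have hst : star A.trace ≠ 0 := by
        intro hc
        exact h0 (by simpa using congrArg star hc)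
      exact mul_right_cancel₀ hst (r1.trans r2.symm)
  rw [charpoly_eq hA hA', charpoly_eq hB hB', htr, hdet]
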